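/- Let A_in and A_out be the 4×2 matrices A_in = [[ξ₁, −ξ₃ˢ],[ξ₃ᵖ, ξ₁],[2μξ₃ᵖξ₁, μ(2ξ₁²−c_s⁻²τ²)],[−μ(2ξ₁²−c_s⁻²τ²), 2μξ₃ˢξ₁]] and A_out = [[ξ₁, ξ₃ˢ],[−ξ₃ᵖ, ξ₁],[−2μξ₃ᵖξ₁, μ(2ξ₁²−c_s⁻²τ²)],[−μ(2ξ₁²−c_s⁻²τ²), −2μξ₃ˢξ₁]]. Then (A_in+A_out)/2 and (A_out−A_in)/2 each have only one nonzero entry per row arranged in 2×2 blocks, and the two resulting 2×2 systems have determinants μ c_s⁻²τ² ξ₃ᵖ and μ c_s⁻²τ² ξ₃ˢ respectively; consequently, if τ ≠ 0, μ > 0, and ξ₃ᵖ, ξ₃ˢ are nonzero (real or pure imaginary with positive imaginary part), the 4×4 matrix (A_in | A_out) is invertible. -/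

import Mathlib

private lemma det_fin_four_aux (a b c d e f g h i j k l m n o p : ℂ) :
    Matrix.det !![a,b,c,d; e,f,g,h; i,j,k,l; m,n,o,p]
      = a*(f*(k*p-l*o)-g*(j*p-l*n)+h*(j*o-k*n))
      - b*(e*(k*p-l*o)-g*(i*p-l*m)+h*(i*o-k*m))
      + c*(e*(j*p-l*n)-f*(i*p-l*m)+h*(i*n-j*m))
      - d*(e*(j*o-k*n)-f*(i*o-k*m)+g*(i*n-j*m)) := by
  simp [Matrix.det_succ_row_zero, Fin.sum_univ_succ, Matrix.det_fin_three,
    Fin.succAbove, Fin.castSucc, Fin.castAdd, Fin.castLE]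
  ring

/-- Ellipticity of the elastic Cauchy boundary value problem (Lemma `lemma_A`):
the half-sum and half-difference of `A_in`, `A_out` are block matrices with one
nonzero entry per row, the two resulting `2×2` systems have determinants
`μ c_s⁻²τ² ξ₃ᵖ` and `μ c_s⁻²τ² ξ₃ˢ`, and consequently the `4×4` matrix
`(A_in | A_out)` is invertible when `τ ≠ 0`, `μ > 0` and `ξ₃ᵖ, ξ₃ˢ` are nonzero
real or pure imaginary with positive imaginary part. -/
theorem stmt_19 (μ cs τ ξ1 : ℝ) (hμ : 0 < μ) (hcs : 0 < cs) (hτ : τ ≠ 0)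
    (ξ3p ξ3s : ℂ)
    (hξ3p : ξ3p ≠ 0 ∧ (ξ3p.im = 0 ∨ (ξ3p.re = 0 ∧ 0 < ξ3p.im)))
    (hξ3s : ξ3s ≠ 0 ∧ (ξ3s.im = 0 ∨ (ξ3s.re = 0 ∧ 0 < ξ3s.im))) :
    let q : ℂ := ((μ * (2 * ξ1 ^ 2 - τ ^ 2 / cs ^ 2) : ℝ) : ℂ)
    let Ain : Matrix (Fin 4) (Fin 2) ℂ :=
      !![(ξ1 : ℂ), -ξ3s;
         ξ3p, (ξ1 : ℂ);
         2 * (μ : ℂ) * ξ3p * (ξ1 : ℂ), q;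
         -q, 2 * (μ : ℂ) * ξ3s * (ξ1 : ℂ)]
    let Aout : Matrix (Fin 4) (Fin 2) ℂ :=
      !![(ξ1 : ℂ), ξ3s;
         -ξ3p, (ξ1 : ℂ);
         -(2 * (μ : ℂ) * ξ3p * (ξ1 : ℂ)), q;
         -q, -(2 * (μ : ℂ) * ξ3s * (ξ1 : ℂ))]
    ((1 / 2 : ℂ) • (Ain + Aout)
        = !![(ξ1 : ℂ), 0; 0, (ξ1 : ℂ); 0, q; -q, 0]) ∧
    ((1 / 2 : ℂ) • (Aout - Ain)
        = !![0, ξ3s; -ξ3p, 0; -(2 * (μ : ℂ) * ξ3p * (ξ1 : ℂ)), 0;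
             0, -(2 * (μ : ℂ) * ξ3s * (ξ1 : ℂ))]) ∧
    (Matrix.det !![-ξ3p, (ξ1 : ℂ); -(2 * (μ : ℂ) * ξ3p * (ξ1 : ℂ)), q]
        = ((μ / cs ^ 2 * τ ^ 2 : ℝ) : ℂ) * ξ3p) ∧
    (Matrix.det !![ξ3s, (ξ1 : ℂ); -(2 * (μ : ℂ) * ξ3s * (ξ1 : ℂ)), -q]
        = ((μ / cs ^ 2 * τ ^ 2 : ℝ) : ℂ) * ξ3s) ∧
    IsUnit (Matrix.det
      !![(ξ1 : ℂ), -ξ3s, (ξ1 : ℂ), ξ3s;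
         ξ3p, (ξ1 : ℂ), -ξ3p, (ξ1 : ℂ);
         2 * (μ : ℂ) * ξ3p * (ξ1 : ℂ), q, -(2 * (μ : ℂ) * ξ3p * (ξ1 : ℂ)), q;
         -q, 2 * (μ : ℂ) * ξ3s * (ξ1 : ℂ), -q, -(2 * (μ : ℂ) * ξ3s * (ξ1 : ℂ))]) := by
  have hcs' : (cs:ℝ) ≠ 0 := ne_of_gt hcs
  intro q Ain Aout
  have hcsC : (cs:ℂ) ≠ 0 := by exact_mod_cast hcs'
  refine ⟨?_, ?_, ?_, ?_, ?_⟩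
  · ext i j
    fin_cases i <;> fin_cases j <;>
      simp [Ain, Aout, q, Matrix.smul_apply] <;> ring
  · ext i j
    fin_cases i <;> fin_cases j <;>
      simp [Ain, Aout, q, Matrix.smul_apply] <;> ring
  · simp only [Matrix.det_fin_two_of, q]
    push_cast
    field_simp
    ring
  · simp only [Matrix.det_fin_two_of, q]
    push_cast
    field_simp
    ring
  · have hdet : Matrix.det
      !![(ξ1 : ℂ), -ξ3s, (ξ1 : ℂ), ξ3s;
         ξ3p, (ξ1 : ℂ), -ξ3p, (ξ1 : ℂ);
         2 * (μ : ℂ) * ξ3p * (ξ1 : ℂ), q, -(2 * (μ : ℂ) * ξ3p * (ξ1 : ℂ)), q;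
         -q, 2 * (μ : ℂ) * ξ3s * (ξ1 : ℂ), -q, -(2 * (μ : ℂ) * ξ3s * (ξ1 : ℂ))]
        = 4 * ((μ / cs ^ 2 * τ ^ 2 : ℝ) : ℂ) ^ 2 * ξ3p * ξ3s := by
      rw [det_fin_four_aux]
      simp only [q]
      push_cast
      field_simp
      ring
    rw [hdet, isUnit_iff_ne_zero]
    have hμτ : ((μ / cs ^ 2 * τ ^ 2 : ℝ) : ℂ) ≠ 0 := by
      have : (μ / cs ^ 2 * τ ^ 2 : ℝ) ≠ 0 := by positivity
      exact_mod_cast this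
    exact mul_ne_zero (mul_ne_zero (mul_ne_zero (by norm_num) (pow_ne_zero _ hμτ)) hξ3p.1) hξ3s.1
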